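/- Let m ≥ 2 and let B be a blocker in CK(2m) such that e = {2m−3, 2m−2} ∈ B and f = {2m−2, 2m−1} ∉ B. Then no edge of B other than e contains the vertex 2m−2 or the vertex 2m−1. -/

import Mathlib

def inArc (n : ℕ) (a b z : ZMod n) : Prop :=
  0 < (z - a).val ∧ (z - a).val < (b - a).val

def Cross (n : ℕ) (e f : Sym2 (ZMod n)) : Prop :=
  ∃ a b c d : ZMod n, e = s(a, b) ∧ f = s(c, d) ∧
    a ≠ b ∧ a ≠ c ∧ a ≠ d ∧ b ≠ c ∧ b ≠ d ∧ c ≠ d ∧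
    Xor' (inArc n a b c) (inArc n a b d)

def IsSPM (m : ℕ) (M : Finset (Sym2 (ZMod (2 * m)))) : Prop :=
  M.card = m ∧
  (∀ e ∈ M, ¬ e.IsDiag) ∧
  (∀ v : ZMod (2 * m), ∃! e, e ∈ M ∧ v ∈ e) ∧
  (∀ e ∈ M, ∀ f ∈ M, ¬ Cross (2 * m) e f)

def IsBlockingSet (m : ℕ) (B : Set (Sym2 (ZMod (2 * m)))) : Prop :=
  (∀ e ∈ B, ¬ e.IsDiag) ∧
  ∀ M : Finset (Sym2 (ZMod (2 * m))), IsSPM m M → ∃ e ∈ M, e ∈ B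

def IsBlocker (m : ℕ) (B : Finset (Sym2 (ZMod (2 * m)))) : Prop :=
  IsBlockingSet m (B : Set (Sym2 (ZMod (2 * m)))) ∧ B.card = m

def IsBoundaryEdge (m : ℕ) (e : Sym2 (ZMod (2 * m))) : Prop :=
  ∃ i : ZMod (2 * m), e = s(i, i + 1)

def edgeOrder {n : ℕ} (e : Sym2 (ZMod n)) : ℕ :=
  Sym2.lift ⟨fun i j => min (i - j).val (j - i).val, fun i j => min_comm _ _⟩ e

def edgeSum {n : ℕ} (e : Sym2 (ZMod n)) : ZMod n :=
  Sym2.lift ⟨fun i j => i + j, fun i j => add_comm i j⟩ e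

lemma castinj {n : ℕ} [NeZero n] {x y : ℕ} (hx : x < n) (hy : y < n)
    (h : (x : ZMod n) = y) : x = y := by
  have := congrArg ZMod.val h
  rwa [ZMod.val_cast_of_lt hx, ZMod.val_cast_of_lt hy] at this

lemma val_sub_cast {n : ℕ} [NeZero n] {x y : ℕ} (hx : x < n) (hy : y < n) :
    ((x : ZMod n) - y).val = if y ≤ x then x - y else x + n - y := by
  have h1 : ((x : ZMod n) - y) = ((x + n - y : ℕ) : ZMod n) := by
    have h2 : y ≤ x + n := by omega
    push_cast [Nat.cast_sub h2]
    simp [ZMod.natCast_self]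
  rw [h1, ZMod.val_natCast]
  rcases le_or_gt y x with h | h
  · have h3 : x + n - y = (x - y) + n := by omega
    rw [h3, Nat.add_mod_right, Nat.mod_eq_of_lt (by omega)]
    simp [h]
  · rw [Nat.mod_eq_of_lt (by omega)]
    simp [not_le.mpr h]

lemma inArc_lt {n : ℕ} [NeZero n] {a b z : ℕ} (ha : a < n) (hb : b < n) (hz : z < n)
    (hab : a < b) : inArc n a b z ↔ (a < z ∧ z < b) := by
  unfold inArc
  rw [val_sub_cast hz ha, val_sub_cast hb ha]
  split_ifs <;> omega

lemma inArc_gt {n : ℕ} [NeZero n] {a b z : ℕ} (ha : a < n) (hb : b < n) (hz : z < n)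
    (hab : a < b) : inArc n (b : ZMod n) a z ↔ (z < a ∨ b < z) := by
  unfold inArc
  rw [val_sub_cast hz hb, val_sub_cast ha hb]
  split_ifs <;> omega

lemma notCross_self {n : ℕ} (e : Sym2 (ZMod n)) : ¬ Cross n e e := by
  rintro ⟨a, b, c, d, he, hf, hab, hac, had, hbc, hbd, hcd, hx⟩
  rw [he, Sym2.eq_iff] at hf
  rcases hf with ⟨rfl, rfl⟩ | ⟨rfl, rfl⟩
  · exact hac rfl
  · exact had rfl

lemma notCross {n : ℕ} [NeZero n] {a b c d : ℕ} (ha : a < n) (hb : b < n) (hc : c < n)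
    (hd : d < n) (hab : a < b) (hcd : c < d)
    (h1 : ¬ (a < c ∧ c < b ∧ b < d)) (h2 : ¬ (c < a ∧ a < d ∧ d < b)) :
    ¬ Cross n s((a : ZMod n), (b : ZMod n)) s((c : ZMod n), (d : ZMod n)) := by
  rintro ⟨a', b', c', d', he, hf, hab', hac', had', hbc', hbd', hcd', hx⟩
  rw [Sym2.eq_iff] at he hf
  have K : ∀ {x y : ℕ}, (x : ZMod n) ≠ (y : ZMod n) → x ≠ y :=
    fun h hxy => h (congrArg _ hxy)
  rcases he with ⟨rfl, rfl⟩ | ⟨rfl, rfl⟩ <;> rcases hf with ⟨rfl, rfl⟩ | ⟨rfl, rfl⟩ <;>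
    have := K hac' <;> have := K had' <;> have := K hbc' <;> have := K hbd' <;>
    simp only [inArc_lt ha hb hc hab, inArc_lt ha hb hd hab,
      inArc_gt ha hb hc hab, inArc_gt ha hb hd hab, Xor', Xor] at hx <;>
    omega

def Px (m j t : ℕ) : ℕ := if t ≤ j then t else t + j + 1
def Py (m j t : ℕ) : ℕ := if t ≤ j then 2*j + 1 - t else 2*(m-1) + j - t

lemma Pxy_lt {m j t : ℕ} (hm : 2 ≤ m) (hj : j < m - 1) (ht : t < m - 1) :
    Px m j t < Py m j t ∧ Py m j t < 2*m - 2 := by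
  unfold Px Py; split_ifs <;> omega

lemma Pxy_sum {m j t : ℕ} (hm : 2 ≤ m) (hj : j < m - 1) (ht : t < m - 1) :
    Px m j t + Py m j t = 2*j + 1 ∨ Px m j t + Py m j t = 2*(m-1) + 2*j + 1 := by
  unfold Px Py; split_ifs <;> omega

lemma t_exists {m j w : ℕ} (hm : 2 ≤ m) (hj : j < m - 1) (hw : w < 2*m - 2) :
    ∃ t, t < m - 1 ∧ (Px m j t = w ∨ Py m j t = w) := by
  refine ⟨if w ≤ j then w else if w ≤ 2*j+1 then 2*j+1-w
    else if w ≤ (m-1)+j then w-j-1 else 2*(m-1)+j-w, ?_, ?_⟩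
  · split_ifs <;> omega
  · unfold Px Py; split_ifs <;> omega

lemma t_unique {m j t t' w : ℕ} (hj : j < m - 1) (ht : t < m - 1)
    (ht' : t' < m - 1) (h : Px m j t = w ∨ Py m j t = w)
    (h' : Px m j t' = w ∨ Py m j t' = w) : t = t' := by
  unfold Px Py at h h'; split_ifs at h h' <;> omega

lemma Pp_noncross {m j t t' : ℕ} (hj : j < m - 1) (ht : t < m - 1)
    (ht' : t' < m - 1) :
    ¬ (Px m j t < Px m j t' ∧ Px m j t' < Py m j t ∧ Py m j t < Py m j t') ∧
    ¬ (Px m j t' < Px m j t ∧ Px m j t < Py m j t' ∧ Py m j t' < Py m j t) := by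
  unfold Px Py; split_ifs <;> omega

def Ee (m j t : ℕ) : Sym2 (ZMod (2*m)) :=
  s(((Px m j t : ℕ) : ZMod (2*m)), ((Py m j t : ℕ) : ZMod (2*m)))

def Mm (m j : ℕ) : Finset (Sym2 (ZMod (2*m))) :=
  insert s(((2*m - 2 : ℕ) : ZMod (2*m)), ((2*m - 1 : ℕ) : ZMod (2*m)))
    ((Finset.range (m-1)).image (Ee m j))

section
variable {m : ℕ} (hm : 2 ≤ m)
include hm

lemma Ee_inj {j j' t t' : ℕ} (hj : j < m - 1) (hj' : j' < m - 1) (ht : t < m - 1)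
    (ht' : t' < m - 1) (h : Ee m j t = Ee m j' t') : j = j' ∧ t = t' := by
  haveI : NeZero (2*m) := ⟨by omega⟩
  obtain ⟨h1, h2⟩ := Pxy_lt hm hj ht
  obtain ⟨h1', h2'⟩ := Pxy_lt hm hj' ht'
  unfold Ee at h
  rw [Sym2.eq_iff] at h
  have hx : Px m j t = Px m j' t' ∧ Py m j t = Py m j' t' := by
    rcases h with ⟨ha, hb⟩ | ⟨ha, hb⟩
    · exact ⟨castinj (by omega) (by omega) ha, castinj (by omega) (by omega) hb⟩
    · have := castinj (n := 2*m) (by omega) (by omega) ha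
      have := castinj (n := 2*m) (by omega) (by omega) hb
      omega
  have hsum := Pxy_sum hm hj ht
  have hsum' := Pxy_sum hm hj' ht'
  have hjj : j = j' := by omega
  subst hjj
  exact ⟨rfl, t_unique hj ht ht' (Or.inl hx.1) (Or.inl rfl)⟩

lemma fEdge_ne_Ee {j t : ℕ} (hj : j < m - 1) (ht : t < m - 1) :
    s(((2*m - 2 : ℕ) : ZMod (2*m)), ((2*m - 1 : ℕ) : ZMod (2*m))) ≠ Ee m j t := by
  haveI : NeZero (2*m) := ⟨by omega⟩
  obtain ⟨h1, h2⟩ := Pxy_lt hm hj ht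
  unfold Ee
  intro heq
  rw [Sym2.eq_iff] at heq
  rcases heq with ⟨ha, hb⟩ | ⟨ha, hb⟩
  · have := castinj (n := 2*m) (by omega) (by omega) ha
    omega
  · have := castinj (n := 2*m) (by omega) (by omega) ha
    omega

lemma mem_Ee_val {j t : ℕ} (hj : j < m - 1) (ht : t < m - 1) {v : ZMod (2*m)}
    (hv : v ∈ Ee m j t) : v.val < 2*m - 2 := by
  haveI : NeZero (2*m) := ⟨by omega⟩
  obtain ⟨h1, h2⟩ := Pxy_lt hm hj ht
  unfold Ee at hv
  rw [Sym2.mem_iff] at hv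
  rcases hv with rfl | rfl <;> rw [ZMod.val_cast_of_lt (by omega)] <;> omega

lemma Mm_SPM {j : ℕ} (hj : j < m - 1) : IsSPM m (Mm m j) := by
  haveI : NeZero (2*m) := ⟨by omega⟩
  have hnm : s(((2*m - 2 : ℕ) : ZMod (2*m)), ((2*m - 1 : ℕ) : ZMod (2*m))) ∉
      (Finset.range (m-1)).image (Ee m j) := by
    rw [Finset.mem_image]
    rintro ⟨t, ht, heq⟩
    rw [Finset.mem_range] at ht
    exact fEdge_ne_Ee hm hj ht heq.symm
  refine ⟨?_, ?_, ?_, ?_⟩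
  · rw [Mm, Finset.card_insert_of_notMem hnm,
      Finset.card_image_of_injOn (fun t ht t' ht' h => by
        rw [Finset.coe_range, Set.mem_Iio] at ht ht'
        exact (Ee_inj hm hj hj ht ht' h).2), Finset.card_range]
    omega
  · intro x hx
    rw [Mm, Finset.mem_insert] at hx
    rcases hx with rfl | hx
    · rw [Sym2.mk_isDiag_iff]
      intro h
      have := castinj (n := 2*m) (by omega) (by omega) h
      omega
    · rw [Finset.mem_image] at hx
      obtain ⟨t, ht, rfl⟩ := hx
      rw [Finset.mem_range] at ht
      obtain ⟨h1, h2⟩ := Pxy_lt hm hj ht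
      rw [Ee, Sym2.mk_isDiag_iff]
      intro h
      have := castinj (n := 2*m) (by omega) (by omega) h
      omega
  · intro v
    have hvlt : v.val < 2*m := ZMod.val_lt v
    have hv : ((v.val : ℕ) : ZMod (2*m)) = v := by
      rw [ZMod.natCast_val, ZMod.cast_id]
    by_cases hw : v.val < 2*m - 2
    · obtain ⟨t, ht, hPt⟩ := t_exists hm hj hw
      refine ⟨Ee m j t, ⟨Finset.mem_insert_of_mem (Finset.mem_image.2
        ⟨t, Finset.mem_range.2 ht, rfl⟩), ?_⟩, ?_⟩
      · rw [Ee, Sym2.mem_iff]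
        rcases hPt with h | h
        · exact Or.inl (by rw [h, hv])
        · exact Or.inr (by rw [h, hv])
      · rintro x ⟨hxM, hvx⟩
        rw [Mm, Finset.mem_insert] at hxM
        rcases hxM with rfl | hxM
        · rw [Sym2.mem_iff] at hvx
          rcases hvx with rfl | rfl <;>
            rw [ZMod.val_cast_of_lt (by omega)] at hw <;> omega
        · rw [Finset.mem_image] at hxM
          obtain ⟨t', ht', rfl⟩ := hxM
          rw [Finset.mem_range] at ht'
          obtain ⟨h1, h2⟩ := Pxy_lt hm hj ht'
          have hPt' : Px m j t' = v.val ∨ Py m j t' = v.val := by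
            rw [Ee, Sym2.mem_iff] at hvx
            rcases hvx with rfl | rfl
            · exact Or.inl (ZMod.val_cast_of_lt (by omega)).symm
            · exact Or.inr (ZMod.val_cast_of_lt (by omega)).symm
          rw [t_unique hj ht' ht hPt' hPt]
    · refine ⟨s(((2*m - 2 : ℕ) : ZMod (2*m)), ((2*m - 1 : ℕ) : ZMod (2*m))),
        ⟨Finset.mem_insert_self _ _, ?_⟩, ?_⟩
      · rw [Sym2.mem_iff]
        rcases (by omega : v.val = 2*m - 2 ∨ v.val = 2*m - 1) with h | h
        · exact Or.inl (by rw [← hv, h])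
        · exact Or.inr (by rw [← hv, h])
      · rintro x ⟨hxM, hvx⟩
        rw [Mm, Finset.mem_insert] at hxM
        rcases hxM with rfl | hxM
        · rfl
        · rw [Finset.mem_image] at hxM
          obtain ⟨t', ht', rfl⟩ := hxM
          rw [Finset.mem_range] at ht'
          exact absurd (mem_Ee_val hm hj ht' hvx) (by omega)
  · intro x hx y hy
    rw [Mm, Finset.mem_insert] at hx hy
    have hfx : ∀ t < m - 1, ¬ Cross (2*m)
        s(((2*m - 2 : ℕ) : ZMod (2*m)), ((2*m - 1 : ℕ) : ZMod (2*m))) (Ee m j t) := by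
      intro t ht
      obtain ⟨h1, h2⟩ := Pxy_lt hm hj ht
      exact notCross (by omega) (by omega) (by omega) (by omega) (by omega) h1
        (by omega) (by omega)
    have hxf : ∀ t < m - 1, ¬ Cross (2*m) (Ee m j t)
        s(((2*m - 2 : ℕ) : ZMod (2*m)), ((2*m - 1 : ℕ) : ZMod (2*m))) := by
      intro t ht
      obtain ⟨h1, h2⟩ := Pxy_lt hm hj ht
      exact notCross (by omega) (by omega) (by omega) (by omega) h1 (by omega)
        (by omega) (by omega)
    rcases hx with rfl | hx <;> rcases hy with rfl | hy
    · exact notCross_self _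
    · obtain ⟨t, ht, rfl⟩ := Finset.mem_image.1 hy
      exact hfx t (Finset.mem_range.1 ht)
    · obtain ⟨t, ht, rfl⟩ := Finset.mem_image.1 hx
      exact hxf t (Finset.mem_range.1 ht)
    · obtain ⟨t, ht, rfl⟩ := Finset.mem_image.1 hx
      obtain ⟨t', ht', rfl⟩ := Finset.mem_image.1 hy
      rw [Finset.mem_range] at ht ht'
      obtain ⟨h1, h2⟩ := Pxy_lt hm hj ht
      obtain ⟨h1', h2'⟩ := Pxy_lt hm hj ht'
      obtain ⟨hc1, hc2⟩ := Pp_noncross hj ht ht' (m := m)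
      exact notCross (by omega) (by omega) (by omega) (by omega) h1 h1' hc1 hc2

end


theorem no_other_edge_at_f (m : ℕ) (hm : 2 ≤ m)
    (B : Finset (Sym2 (ZMod (2 * m)))) (hB : IsBlocker m B)
    (he : s(((2 * m - 3 : ℕ) : ZMod (2 * m)), ((2 * m - 2 : ℕ) : ZMod (2 * m))) ∈ B)
    (hf : s(((2 * m - 2 : ℕ) : ZMod (2 * m)), ((2 * m - 1 : ℕ) : ZMod (2 * m))) ∉ B) :
    ∀ g ∈ B, g ≠ s(((2 * m - 3 : ℕ) : ZMod (2 * m)), ((2 * m - 2 : ℕ) : ZMod (2 * m))) →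
      ((2 * m - 2 : ℕ) : ZMod (2 * m)) ∉ g ∧ ((2 * m - 1 : ℕ) : ZMod (2 * m)) ∉ g := by
  intro g hg hge
  haveI : NeZero (2*m) := ⟨by omega⟩
  by_contra hcon
  rw [not_and_or, not_not, not_not] at hcon
  have hex : ∀ j : ℕ, ∃ x, j < m - 1 → x ∈ B ∧ ∃ t, t < m - 1 ∧ x = Ee m j t := by
    intro j
    by_cases hj : j < m - 1
    · obtain ⟨x, hxM, hxB⟩ := hB.1.2 (Mm m j) (Mm_SPM hm hj)
      refine ⟨x, fun _ => ⟨Finset.mem_coe.1 hxB, ?_⟩⟩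
      rw [Mm, Finset.mem_insert] at hxM
      rcases hxM with rfl | hxM
      · exact absurd (Finset.mem_coe.1 hxB) hf
      · obtain ⟨t, ht, rfl⟩ := Finset.mem_image.1 hxM
        exact ⟨t, Finset.mem_range.1 ht, rfl⟩
    · exact ⟨s((0 : ZMod (2*m)), 0), fun h => absurd h hj⟩
  choose σ hσ using hex
  have hσB : ∀ j < m - 1, σ j ∈ B := fun j hj => (hσ j hj).1
  have hσE : ∀ j < m - 1, ∃ t, t < m - 1 ∧ σ j = Ee m j t := fun j hj => (hσ j hj).2
  have hval : ∀ j < m - 1, ∀ v ∈ σ j, v.val < 2*m - 2 := by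
    intro j hj v hv
    obtain ⟨t, ht, hEq⟩ := hσE j hj
    rw [hEq] at hv
    exact mem_Ee_val hm hj ht hv
  have hinj : Set.InjOn σ ↑(Finset.range (m-1)) := by
    intro j hjr j' hjr' hEq
    rw [Finset.coe_range, Set.mem_Iio] at hjr hjr'
    obtain ⟨t, ht, h1⟩ := hσE j hjr
    obtain ⟨t', ht', h2⟩ := hσE j' hjr'
    rw [h1, h2] at hEq
    exact (Ee_inj hm hjr hjr' ht ht' hEq).1
  set S := (Finset.range (m-1)).image σ with hS
  have hScard : S.card = m - 1 := by
    rw [hS, Finset.card_image_of_injOn hinj, Finset.card_range]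
  have hSsub : S ⊆ B := by
    intro x hx
    obtain ⟨j, hj, rfl⟩ := Finset.mem_image.1 hx
    exact hσB j (Finset.mem_range.1 hj)
  have hval22 : ((2*m - 2 : ℕ) : ZMod (2*m)).val = 2*m - 2 := ZMod.val_cast_of_lt (by omega)
  have hval21 : ((2*m - 1 : ℕ) : ZMod (2*m)).val = 2*m - 1 := ZMod.val_cast_of_lt (by omega)
  have heS : s(((2 * m - 3 : ℕ) : ZMod (2 * m)), ((2 * m - 2 : ℕ) : ZMod (2 * m))) ∉ S := by
    intro hx
    obtain ⟨j, hj, hEq⟩ := Finset.mem_image.1 hx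
    have hmem : ((2*m - 2 : ℕ) : ZMod (2*m)) ∈ σ j := by
      rw [hEq]; exact Sym2.mem_mk_right _ _
    have := hval j (Finset.mem_range.1 hj) _ hmem
    omega
  have hgS : g ∉ S := by
    intro hx
    obtain ⟨j, hj, hEq⟩ := Finset.mem_image.1 hx
    rcases hcon with hc | hc
    · have := hval j (Finset.mem_range.1 hj) _ (hEq ▸ hc)
      omega
    · have := hval j (Finset.mem_range.1 hj) _ (hEq ▸ hc)
      omega
  have hsub2 : insert s(((2 * m - 3 : ℕ) : ZMod (2 * m)), ((2 * m - 2 : ℕ) : ZMod (2 * m)))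
      (insert g S) ⊆ B := by
    intro x hx
    rcases Finset.mem_insert.1 hx with rfl | hx
    · exact he
    · rcases Finset.mem_insert.1 hx with rfl | hx
      · exact hg
      · exact hSsub hx
  have hnm1 : s(((2 * m - 3 : ℕ) : ZMod (2 * m)), ((2 * m - 2 : ℕ) : ZMod (2 * m))) ∉
      insert g S := by
    rw [Finset.mem_insert]
    rintro (heq | hmem)
    · exact hge heq.symm
    · exact heS hmem
  have hcard2 := Finset.card_le_card hsub2
  rw [Finset.card_insert_of_notMem hnm1, Finset.card_insert_of_notMem hgS, hScard, hB.2]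
    at hcard2
  omega
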